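/- arXiv:1212.3026 — 3 statements merged into one kernel-verified Lean document; each statement's English description precedes it below -/
import Mathlib

section
/- For 0 < δ < 1 and any integer shifts, the translated flat-top functions x ↦ ψ_δ(x - 2k), k ∈ ℤ, form a partition of unity on ℝ: for every x ∈ ℝ, the sum over k ∈ ℤ of ψ_δ(x - 2k) equals 1 (with at most two nonzero terms). -/
open Set

/-- The integer translates x ↦ ψ_δ(x - 2k), k ∈ ℤ, of the flat-top function form a
    partition of unity on ℝ: their sum is 1, with at most two nonzero terms. -/
theorem stmt_4 (δ : ℝ) (hδ : 0 < δ) (hδ1 : δ < 1)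
    (phiL phiR psi : ℝ → ℝ)
    (hL : ∀ x : ℝ, phiL x = (1 + x) ^ 2 * (1 - 2 * x))
    (hR : ∀ x : ℝ, phiR x = (1 - x) ^ 2 * (1 + 2 * x))
    (hpsi1 : ∀ x ∈ Icc (-1 - δ) (-1 + δ), psi x = phiL ((x + 1 - δ) / (2 * δ)))
    (hpsi2 : ∀ x ∈ Icc (-1 + δ) (1 - δ), psi x = 1)
    (hpsi3 : ∀ x ∈ Icc (1 - δ) (1 + δ), psi x = phiR ((x - 1 + δ) / (2 * δ)))
    (hpsi4 : ∀ x : ℝ, x ∉ Icc (-1 - δ) (1 + δ) → psi x = 0) :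
    ∀ x : ℝ, (∑' k : ℤ, psi (x - 2 * k) = 1) ∧
      {k : ℤ | psi (x - 2 * k) ≠ 0}.Finite ∧
      {k : ℤ | psi (x - 2 * k) ≠ 0}.ncard ≤ 2 := by
  have hδ' : (2 : ℝ) * δ ≠ 0 := by positivity
  have hzero : ∀ y : ℝ, y ≤ -1 - δ ∨ 1 + δ ≤ y → psi y = 0 := by
    intro y hy
    rcases hy with hy | hy
    · rcases eq_or_lt_of_le hy with h | h
      · rw [hpsi1 y ⟨le_of_eq h.symm, by linarith⟩, hL]
        have harg : (y + 1 - δ) / (2 * δ) = -1 := by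
          rw [h]; field_simp; ring
        rw [harg]; ring
      · exact hpsi4 y (by simp only [mem_Icc, not_and_or, not_le]; left; linarith)
    · rcases eq_or_lt_of_le hy with h | h
      · rw [hpsi3 y ⟨by linarith, le_of_eq h.symm⟩, hR]
        have harg : (y - 1 + δ) / (2 * δ) = 1 := by
          rw [← h]; field_simp; ring
        rw [harg]; ring
      · exact hpsi4 y (by simp only [mem_Icc, not_and_or, not_le]; right; linarith)
  intro x
  set k : ℤ := ⌊(x + 1 + δ) / 2⌋ with hkdef
  have hk1 : (k : ℝ) ≤ (x + 1 + δ) / 2 := Int.floor_le _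
  have hk2 : (x + 1 + δ) / 2 < k + 1 := Int.lt_floor_add_one _
  have hlo : -1 - δ ≤ x - 2 * k := by linarith
  have hhi : x - 2 * k < 1 - δ := by linarith
  by_cases hcase : -1 + δ ≤ x - 2 * k
  · -- single nonzero term
    have hval : psi (x - 2 * k) = 1 := hpsi2 _ ⟨hcase, hhi.le⟩
    have hothers : ∀ j : ℤ, j ≠ k → psi (x - 2 * j) = 0 := by
      intro j hj
      apply hzero
      rcases lt_or_gt_of_ne hj with h | h
      · right
        have hc : (j : ℝ) ≤ (k : ℝ) - 1 := by exact_mod_cast Int.le_sub_one_of_lt h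
        linarith
      · left
        have hc : (k : ℝ) + 1 ≤ (j : ℝ) := by exact_mod_cast h
        linarith
    have hsub : {j : ℤ | psi (x - 2 * j) ≠ 0} ⊆ {k} := by
      intro j hj
      by_contra h
      exact hj (hothers j (by simpa using h))
    refine ⟨?_, (Set.finite_singleton k).subset hsub, ?_⟩
    · rw [tsum_eq_sum (s := {k}) (fun j hj => hothers j (by simpa using hj))]
      simpa using hval
    · exact (Set.ncard_le_ncard hsub (Set.finite_singleton k)).trans (by simp)
  · -- two nonzero terms: k and k - 1
    push_neg at hcase
    have h1 : psi (x - 2 * k) = phiL ((x - 2 * k + 1 - δ) / (2 * δ)) :=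
      hpsi1 _ ⟨hlo, hcase.le⟩
    have h2 : psi (x - 2 * ((k : ℝ) - 1)) =
        phiR ((x - 2 * ((k : ℝ) - 1) - 1 + δ) / (2 * δ)) :=
      hpsi3 _ ⟨by linarith, by linarith⟩
    have harg : (x - 2 * ((k : ℝ) - 1) - 1 + δ) / (2 * δ)
        = (x - 2 * k + 1 - δ) / (2 * δ) + 1 := by
      field_simp; ring
    have hsum2 : psi (x - 2 * ((k : ℝ) - 1)) + psi (x - 2 * k) = 1 := by
      rw [h1, h2, harg, hL, hR]; ring
    have hothers : ∀ j : ℤ, j ∉ ({k - 1, k} : Finset ℤ) → psi (x - 2 * j) = 0 := by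
      intro j hj
      simp only [Finset.mem_insert, Finset.mem_singleton, not_or] at hj
      apply hzero
      have h' : j ≤ k - 2 ∨ k + 1 ≤ j := by omega
      rcases h' with h | h
      · right
        have hc : (j : ℝ) ≤ (k : ℝ) - 2 := by exact_mod_cast h
        linarith
      · left
        have hc : (k : ℝ) + 1 ≤ (j : ℝ) := by exact_mod_cast h
        linarith
    have hsub : {j : ℤ | psi (x - 2 * j) ≠ 0} ⊆ {k - 1, k} := by
      intro j hj
      by_contra h
      simp only [mem_insert_iff, mem_singleton_iff, not_or] at h
      exact hj (hothers j (by simp [h.1, h.2]))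
    have hfin : ({k - 1, k} : Set ℤ).Finite := Set.toFinite _
    refine ⟨?_, hfin.subset hsub, ?_⟩
    · rw [tsum_eq_sum (s := {k - 1, k}) hothers,
        Finset.sum_pair (by omega : k - 1 ≠ k)]
      have hc : ((k - 1 : ℤ) : ℝ) = (k : ℝ) - 1 := by push_cast; ring
      rw [hc]
      exact hsum2
    · refine (Set.ncard_le_ncard hsub hfin).trans ?_
      exact (Set.ncard_insert_le _ _).trans (by simp)
end

section
/- Let H be a real Hilbert space, a : H × H → ℝ a continuous symmetric bilinear form that is coercive on a closed subspace V, K ⊆ H a nonempty closed convex set with K - K ⊆ V, and f ∈ H*. Then the functional G(v) = (1/2)a(v,v) - f(v) attains a unique minimum over K. -/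
open Filter Topology


/-- Existence and uniqueness of the minimizer of G(v) = ½a(v,v) - f(v) over a nonempty
    closed convex set K, for a continuous symmetric bilinear form a coercive on a
    closed subspace V with K - K ⊆ V. -/
theorem stmt_5 {H : Type*} [NormedAddCommGroup H] [InnerProductSpace ℝ H]
    [CompleteSpace H]
    (a : H →ₗ[ℝ] H →ₗ[ℝ] ℝ) (Cb : ℝ)
    (hbdd : ∀ v w : H, |a v w| ≤ Cb * ‖v‖ * ‖w‖)
    (hsymm : ∀ v w : H, a v w = a w v)
    (V : Submodule ℝ H) (hV : IsClosed (V : Set H))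
    (c : ℝ) (hc : 0 < c) (hcoer : ∀ v ∈ V, c * ‖v‖ ^ 2 ≤ a v v)
    (K : Set H) (hKne : K.Nonempty) (hKcl : IsClosed K) (hKcv : Convex ℝ K)
    (hKV : ∀ v ∈ K, ∀ w ∈ K, v - w ∈ V)
    (f : H →L[ℝ] ℝ) :
    ∃! u, u ∈ K ∧ ∀ v ∈ K,
      (1 / 2) * a u u - f u ≤ (1 / 2) * a v v - f v := by
  classical
  set G : H → ℝ := fun v => (1 / 2) * a v v - f v with hGdef
  clear_value G
  -- continuity of G
  have hbdd' : ∀ v w : H, ‖a v w‖ ≤ Cb * ‖v‖ * ‖w‖ := fun v w => by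
    simpa [Real.norm_eq_abs] using hbdd v w
  have hcontG : Continuous G := by
    have h1 : Continuous fun v : H => a v v := by
      have hA := (LinearMap.mkContinuous₂ a Cb hbdd').continuous₂
      have h2 : Continuous fun v : H => (v, v) := continuous_id.prodMk continuous_id
      have := hA.comp h2
      simpa [Function.uncurry, LinearMap.mkContinuous₂_apply, Function.comp_def] using this
    rw [hGdef]
    exact (continuous_const.mul h1).sub f.continuous
  -- parallelogram identity
  have key : ∀ u v : H, a (u - v) (u - v)
      = 4 * (G u + G v - 2 * G ((1/2 : ℝ) • (u + v))) := by
    intro u v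
    simp only [hGdef, map_add, map_sub, map_smul, LinearMap.add_apply, LinearMap.sub_apply,
      LinearMap.smul_apply, smul_eq_mul, ContinuousLinearMap.map_add,
      ContinuousLinearMap.map_smul]
    ring
  obtain ⟨w₀, hw₀⟩ := hKne
  set B : ℝ := Cb * ‖w₀‖ + ‖f‖ with hBdef
  clear_value B
  -- lower bound
  have hlb : ∀ w ∈ K, G w₀ - B ^ 2 / (2 * c) ≤ G w := by
    intro w hw
    have hvV : w - w₀ ∈ V := hKV w hw w₀ hw₀
    have h1 : G w = G w₀ + a w₀ (w - w₀) + (1/2) * a (w - w₀) (w - w₀) - f (w - w₀) := by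
      have hw' : w = w₀ + (w - w₀) := by abel
      nth_rewrite 1 [hw']
      have hs := hsymm w₀ (w - w₀)
      simp only [hGdef, map_add, LinearMap.add_apply, ContinuousLinearMap.map_add]
      ring_nf
      linarith
    have h2 : c * ‖w - w₀‖ ^ 2 ≤ a (w - w₀) (w - w₀) := hcoer _ hvV
    have h3 : -(Cb * ‖w₀‖ * ‖w - w₀‖) ≤ a w₀ (w - w₀) := neg_le_of_abs_le (hbdd w₀ _)
    have h4 : f (w - w₀) ≤ ‖f‖ * ‖w - w₀‖ := (le_abs_self _).trans (f.le_opNorm _)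
    have h2c : (0:ℝ) < 2 * c := by linarith
    have hquad : -(B ^ 2 / (2 * c)) ≤ c / 2 * ‖w - w₀‖ ^ 2 - B * ‖w - w₀‖ := by
      have key0 : (c / 2 * ‖w - w₀‖ ^ 2 - B * ‖w - w₀‖ + B ^ 2 / (2 * c)) * (2 * c)
          = (c * ‖w - w₀‖ - B) ^ 2 := by
        field_simp; ring
      have h0 : 0 ≤ (c / 2 * ‖w - w₀‖ ^ 2 - B * ‖w - w₀‖ + B ^ 2 / (2 * c)) * (2 * c) := by
        rw [key0]; exact sq_nonneg _
      nlinarith [h0]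
    have h34 : -(B * ‖w - w₀‖) ≤ a w₀ (w - w₀) - f (w - w₀) := by
      rw [hBdef]; linarith
    rw [h1]
    linarith [h2, h34, hquad]
  have hSne : (G '' K).Nonempty := ⟨G w₀, w₀, hw₀, rfl⟩
  have hSbdd : BddBelow (G '' K) :=
    ⟨G w₀ - B ^ 2 / (2 * c), by rintro x ⟨w, hw, rfl⟩; exact hlb w hw⟩
  set m : ℝ := sInf (G '' K) with hmdef
  clear_value m
  have hmle : ∀ w ∈ K, m ≤ G w := fun w hw => by
    rw [hmdef]; exact csInf_le hSbdd ⟨w, hw, rfl⟩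
  -- quantitative convexity
  have quant : ∀ u ∈ K, ∀ v ∈ K, c * ‖u - v‖ ^ 2 ≤ 4 * (G u + G v - 2 * m) := by
    intro u hu v hv
    have hmid : (1/2 : ℝ) • (u + v) ∈ K := by
      have := hKcv hu hv (by norm_num : (0:ℝ) ≤ 1/2) (by norm_num : (0:ℝ) ≤ 1/2)
        (by norm_num : (1/2 : ℝ) + 1/2 = 1)
      simpa [smul_add] using this
    have h1 : c * ‖u - v‖ ^ 2 ≤ a (u - v) (u - v) := hcoer _ (hKV u hu v hv)
    have h2 := key u v
    have h3 := hmle _ hmid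
    linarith
  -- minimizing sequence
  have hseq : ∀ n : ℕ, ∃ w ∈ K, G w < m + 1 / ((n : ℝ) + 1) := by
    intro n
    have hε : (0:ℝ) < 1 / ((n : ℝ) + 1) := by positivity
    rw [hmdef]
    obtain ⟨x, hx, hlt⟩ := Real.lt_sInf_add_pos hSne hε
    obtain ⟨w, hw, rfl⟩ := hx
    exact ⟨w, hw, hlt⟩
  choose u huK huG using hseq
  have hcauchy : CauchySeq u := by
    rw [Metric.cauchySeq_iff]
    intro ε hε
    obtain ⟨N, hN⟩ := exists_nat_gt (16 / (c * ε ^ 2))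
    refine ⟨N, fun p hp q hq => ?_⟩
    have h1 := quant _ (huK p) _ (huK q)
    have h2 := huG p
    have h3 := huG q
    have hNp : (0:ℝ) < (N:ℝ) + 1 := by positivity
    have hp1 : 1 / ((p:ℝ) + 1) ≤ 1 / ((N:ℝ) + 1) := by
      apply one_div_le_one_div_of_le hNp
      have : (N:ℝ) ≤ (p:ℝ) := by exact_mod_cast hp
      linarith
    have hq1 : 1 / ((q:ℝ) + 1) ≤ 1 / ((N:ℝ) + 1) := by
      apply one_div_le_one_div_of_le hNp
      have : (N:ℝ) ≤ (q:ℝ) := by exact_mod_cast hq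
      linarith
    have hcε : 0 < c * ε ^ 2 := by positivity
    have hN3 : 8 / ((N:ℝ) + 1) < c * ε ^ 2 := by
      have hN2 : 16 / (c * ε ^ 2) < (N:ℝ) + 1 := by linarith
      rw [div_lt_iff₀ hNp]
      rw [div_lt_iff₀ hcε] at hN2
      nlinarith
    have h5 : c * ‖u p - u q‖ ^ 2 < 8 / ((N:ℝ) + 1) := by
      have e1 : 4 * (1 / ((N:ℝ)+1)) + 4 * (1 / ((N:ℝ)+1)) = 8 / ((N:ℝ)+1) := by
        field_simp; ring
      linarith
    have hd2 : ‖u p - u q‖ ^ 2 < ε ^ 2 := by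
      have h6 : c * ‖u p - u q‖ ^ 2 < c * ε ^ 2 := by linarith
      exact (mul_lt_mul_iff_right₀ hc).mp h6
    have hd : ‖u p - u q‖ < ε := lt_of_pow_lt_pow_left₀ 2 hε.le hd2
    rwa [dist_eq_norm]
  obtain ⟨z, hz⟩ := cauchySeq_tendsto_of_complete hcauchy
  have hzK : z ∈ K := hKcl.mem_of_tendsto hz (Eventually.of_forall huK)
  have hGz : Tendsto (fun n => G (u n)) atTop (𝓝 (G z)) := (hcontG.tendsto z).comp hz
  have hle : G z ≤ m := by
    have h2 : Tendsto (fun n : ℕ => m + 1 / ((n:ℝ) + 1)) atTop (𝓝 (m + 0)) :=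
      tendsto_const_nhds.add tendsto_one_div_add_atTop_nhds_zero_nat
    rw [add_zero] at h2
    exact le_of_tendsto_of_tendsto' hGz h2 fun n => (huG n).le
  have hmin : ∀ v ∈ K, G z ≤ G v := fun v hv => hle.trans (hmle v hv)
  refine ⟨z, ⟨hzK, fun v hv => by have := hmin v hv; rw [hGdef] at this; simpa using this⟩, ?_⟩
  rintro y ⟨hyK, hymin⟩
  have hymin' : ∀ v ∈ K, G y ≤ G v := fun v hv => by
    rw [hGdef]; simpa using hymin v hv
  have h1 : G y = G z := le_antisymm (hymin' z hzK) (hmin y hyK)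
  have h2 := quant _ hyK _ hzK
  have h4 : G z = m := le_antisymm hle (hmle z hzK)
  have h5 : ‖y - z‖ ^ 2 ≤ 0 := by nlinarith
  have h6 : ‖y - z‖ ^ 2 = 0 := le_antisymm h5 (sq_nonneg _)
  have h7 : ‖y - z‖ = 0 := by
    exact sq_eq_zero_iff.mp h6
  exact sub_eq_zero.mp (norm_eq_zero.mp h7)
end

section
/- Let u solve the variational inequality a(u, v-u) ≥ (f, v-u) for all v ∈ K, and let u_h solve the discrete inequality a(u_h, v - u_h) ≥ (f, v - u_h) for all v ∈ K_h, where a is a symmetric bilinear form and |·| denotes the seminorm induced by a. Then for any w ∈ K_h, |w - u_h|² ≤ |w - u|² + 2[a(u, w - u_h) - (f, w - u_h)]. -/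
/-- Preliminary estimate: if u solves the VI over K and u_h the discrete VI over K_h,
    then for any w ∈ K_h,
    |w - u_h|² ≤ |w - u|² + 2[a(u, w - u_h) - (f, w - u_h)],
    where |v|² = a(v,v). -/
theorem stmt_8 {E : Type*} [AddCommGroup E] [Module ℝ E]
    (a : E →ₗ[ℝ] E →ₗ[ℝ] ℝ)
    (hsymm : ∀ v w : E, a v w = a w v)
    (hpsd : ∀ v : E, 0 ≤ a v v)
    (f : E →ₗ[ℝ] ℝ)
    (K Kh : Set E) (hKcv : Convex ℝ K) (hKhcv : Convex ℝ Kh)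
    (u uh : E) (hu : u ∈ K) (huh : uh ∈ Kh)
    (hVI : ∀ v ∈ K, f (v - u) ≤ a u (v - u))
    (hVIh : ∀ v ∈ Kh, f (v - uh) ≤ a uh (v - uh)) :
    ∀ w ∈ Kh,
      a (w - uh) (w - uh) ≤
        a (w - u) (w - u) + 2 * (a u (w - uh) - f (w - uh)) := by
  intro w hw
  have h1 := hVIh w hw
  have h2 := hpsd ((w - u) - (w - uh))
  simp only [map_sub, LinearMap.sub_apply] at *
  linarith [hsymm u uh, hsymm w u, hsymm w uh, hsymm u w, hsymm uh w, hsymm uh u]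
end
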